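/- Let Ŝ be a uniform sampling of {1,...,n}, w ∈ R^n, and g : R^N → R ∪ {+∞} be block separable, g(x) = Σ_{i=1}^n g_i(x^{(i)}). Then for all x, h, E[g(x + h_{[Ŝ]})] = (E[|Ŝ|]/n) g(x+h) + (1 − E[|Ŝ|]/n) g(x), where h_{[S]} denotes the vector whose blocks in S equal those of h and whose other blocks are zero. -/

import Mathlib

open Finset


lemma ereal_coe_mul_add (c : ℝ) (hc : 0 ≤ c) (a b : EReal) :
    (c : EReal) * (a + b) = (c : EReal) * a + (c : EReal) * b := by
  rcases hc.eq_or_lt with rfl | hc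
  · simp
  · have hpos : (0 : EReal) < (c : EReal) := EReal.coe_pos.mpr hc
    induction a with
    | bot => simp [EReal.mul_bot_of_pos hpos]
    | coe a =>
      induction b with
      | bot => simp [EReal.mul_bot_of_pos hpos]
      | coe b => norm_cast; ring
      | top =>
        rw [EReal.coe_add_top, EReal.mul_top_of_pos hpos, ← EReal.coe_mul, EReal.coe_add_top]
    | top =>
      induction b with
      | bot =>
        rw [EReal.add_bot, EReal.mul_bot_of_pos hpos, EReal.add_bot]
      | coe b =>
        rw [EReal.top_add_coe, EReal.mul_top_of_pos hpos, ← EReal.coe_mul, EReal.top_add_coe]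
      | top =>
        rw [EReal.top_add_top, EReal.mul_top_of_pos hpos, EReal.top_add_top]

lemma ereal_coe_mul_sum {ι : Type*} (s : Finset ι) (c : ℝ) (hc : 0 ≤ c) (f : ι → EReal) :
    (c : EReal) * (∑ i ∈ s, f i) = ∑ i ∈ s, (c : EReal) * f i := by
  classical
  induction s using Finset.induction with
  | empty => simp
  | insert _ _ hx ih => rename_i a s; rw [Finset.sum_insert hx, Finset.sum_insert hx,
      ereal_coe_mul_add c hc, ih]

lemma ereal_sum_coe_mul {ι : Type*} (s : Finset ι) (f : ι → ℝ) (hf : ∀ i ∈ s, 0 ≤ f i)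
    (a : EReal) :
    ((∑ i ∈ s, f i : ℝ) : EReal) * a = ∑ i ∈ s, (f i : EReal) * a := by
  classical
  induction s using Finset.induction with
  | empty => simp
  | insert _ _ hx ih =>
    rename_i b s
    rw [Finset.sum_insert hx, Finset.sum_insert hx, EReal.coe_add,
      EReal.right_distrib_of_nonneg (by exact_mod_cast hf b (mem_insert_self b s))
        (by exact_mod_cast Finset.sum_nonneg fun i hi => hf i (mem_insert_of_mem hi)),
      ih fun i hi => hf i (mem_insert_of_mem hi)]

lemma ereal_key (n : ℕ) (Q : Finset (Fin n) → ℝ) (hQ : ∀ S, 0 ≤ Q S) (β : ℝ) (hβ0 : 0 ≤ β)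
    (hβ : ∀ i : Fin n, (∑ S : Finset (Fin n), if i ∈ S then Q S else 0) = β)
    (A : Fin n → EReal) :
    ∑ S : Finset (Fin n), (Q S : EReal) * ∑ i ∈ S, A i = (β : EReal) * ∑ i, A i := by
  classical
  calc ∑ S : Finset (Fin n), (Q S : EReal) * ∑ i ∈ S, A i
      = ∑ S : Finset (Fin n), ∑ i ∈ S, (Q S : EReal) * A i :=
        Finset.sum_congr rfl fun S _ => ereal_coe_mul_sum S (Q S) (hQ S) A
    _ = ∑ S : Finset (Fin n), ∑ i : Fin n,
          (if i ∈ S then (Q S : EReal) * A i else 0) := by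
        refine Finset.sum_congr rfl fun S _ => ?_
        rw [Finset.sum_ite_mem, Finset.univ_inter]
    _ = ∑ i : Fin n, ∑ S : Finset (Fin n),
          (if i ∈ S then (Q S : EReal) * A i else 0) := Finset.sum_comm
    _ = ∑ i : Fin n, (β : EReal) * A i := by
        refine Finset.sum_congr rfl fun i _ => ?_
        have h1 : ∀ S : Finset (Fin n),
            (if i ∈ S then (Q S : EReal) * A i else 0)
              = (((if i ∈ S then Q S else 0 : ℝ)) : EReal) * A i := fun S => by
          split <;> simp
        simp_rw [h1]
        rw [← ereal_sum_coe_mul _ _ (fun S _ => by split; exacts [hQ S, le_refl 0]) (A i),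
          hβ i]
    _ = (β : EReal) * ∑ i, A i := (ereal_coe_mul_sum _ β hβ0 A).symm

/-- **Expectation of a block separable function under a uniform sampling.** Let `Ŝ` be a
uniform sampling of `{1,...,n}` (so `P(i ∈ Ŝ) = E[|Ŝ|]/n` for all `i`) and let
`g(x) = ∑ᵢ gᵢ(x⁽ⁱ⁾)` be block separable with values in `ℝ ∪ {+∞}`. Then for all `x, h`:
`E[g(x + h_{[Ŝ]})] = (E[|Ŝ|]/n) g(x+h) + (1 − E[|Ŝ|]/n) g(x)`. -/
theorem uniform_sampling_block_separable
    (n : ℕ) (E : Fin n → Type*) [∀ i, AddCommGroup (E i)]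
    (P : Finset (Fin n) → ℝ)
    (hP : ∀ S, 0 ≤ P S) (hsum : ∑ S : Finset (Fin n), P S = 1)
    (α : ℝ) (hα : α = (∑ S : Finset (Fin n), P S * (S.card : ℝ)) / n)
    (hunif : ∀ i : Fin n, (∑ S : Finset (Fin n), if i ∈ S then P S else 0) = α)
    (g : ∀ i, E i → EReal) (x h : ∀ i, E i) :
    ∑ S : Finset (Fin n),
        (P S : EReal) * ∑ i, g i (x i + (if i ∈ S then h i else 0))
      = (α : EReal) * (∑ i, g i (x i + h i))
          + (((1 - α : ℝ)) : EReal) * ∑ i, g i (x i) := by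
  classical
  rcases Nat.eq_zero_or_pos n with rfl | hn
  · simp
  have hα0 : 0 ≤ α := by
    rw [hα]
    apply div_nonneg _ (Nat.cast_nonneg n)
    exact Finset.sum_nonneg fun S _ => mul_nonneg (hP S) (Nat.cast_nonneg _)
  have hα1 : 0 ≤ 1 - α := by
    have i0 : Fin n := ⟨0, hn⟩
    have hle : α ≤ ∑ S : Finset (Fin n), P S := by
      rw [← hunif i0]
      exact Finset.sum_le_sum fun S _ => by split; exacts [le_refl _, hP S]
    linarith [hle.trans_eq hsum]
  have hsplit : ∀ S : Finset (Fin n),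
      ∑ i, g i (x i + (if i ∈ S then h i else 0))
        = (∑ i ∈ S, g i (x i + h i)) + ∑ i ∈ Sᶜ, g i (x i) := by
    intro S
    rw [← Finset.sum_add_sum_compl S]
    congr 1
    · exact Finset.sum_congr rfl fun i hi => by rw [if_pos hi]
    · exact Finset.sum_congr rfl fun i hi => by
        rw [if_neg (by simpa using hi), add_zero]
  have hcompl : ∀ i : Fin n,
      (∑ S : Finset (Fin n), if i ∈ Sᶜ then P S else 0) = 1 - α := by
    intro i
    have h2 : ∀ S : Finset (Fin n), (if i ∈ Sᶜ then P S else 0)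
        = P S - (if i ∈ S then P S else 0) := fun S => by
      by_cases hiS : i ∈ S <;> simp [hiS]
    simp_rw [h2, Finset.sum_sub_distrib, hsum, hunif i]
  have hbij : Function.Bijective (fun S : Finset (Fin n) => Sᶜ) :=
    Function.Involutive.bijective fun S => compl_compl S
  have key2 : ∑ S : Finset (Fin n), (P S : EReal) * ∑ i ∈ Sᶜ, g i (x i)
      = ((1 - α : ℝ) : EReal) * ∑ i, g i (x i) := by
    have hre : ∑ S : Finset (Fin n), (P S : EReal) * ∑ i ∈ Sᶜ, g i (x i)
        = ∑ T : Finset (Fin n), (P Tᶜ : EReal) * ∑ i ∈ T, g i (x i) := by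
      refine Fintype.sum_bijective _ hbij _ _ fun S => ?_
      simp
    rw [hre]
    refine ereal_key n (fun T => P Tᶜ) (fun T => hP Tᶜ) (1 - α) hα1 (fun i => ?_) _
    rw [← hcompl i]
    refine (Fintype.sum_bijective _ hbij _ _ fun S => ?_).symm
    simp
  calc ∑ S : Finset (Fin n),
        (P S : EReal) * ∑ i, g i (x i + (if i ∈ S then h i else 0))
      = ∑ S : Finset (Fin n),
          ((P S : EReal) * ∑ i ∈ S, g i (x i + h i)
            + (P S : EReal) * ∑ i ∈ Sᶜ, g i (x i)) := by
        refine Finset.sum_congr rfl fun S _ => ?_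
        rw [hsplit S, ereal_coe_mul_add _ (hP S)]
    _ = (∑ S : Finset (Fin n), (P S : EReal) * ∑ i ∈ S, g i (x i + h i))
          + ∑ S : Finset (Fin n), (P S : EReal) * ∑ i ∈ Sᶜ, g i (x i) :=
        Finset.sum_add_distrib
    _ = (α : EReal) * (∑ i, g i (x i + h i))
          + ((1 - α : ℝ) : EReal) * ∑ i, g i (x i) := by
        rw [ereal_key n P hP α hα0 hunif, key2]
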